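/- Let Λ, k be positive integers and let ε, γ ∈ (0, 1/2) with γ² > ε. Suppose 𝔼 is a (Λ,ε,γ,k)-avoiding set with respect to a family 𝒟 of (γk,γ)-dense spots in a graph H. Suppose (T₁,r₁),…,(T_ℓ,r_ℓ) are rooted trees of total order at most γk/2. Let U ⊆ V(H) with |U| ≤ Λk, and let U* ⊆ 𝔼 with |U*| ≥ εk + ℓ. Then there are mutually disjoint (r_i ↪ U*, V(T_i)∖{r_i} ↪ V(H)∖U)-embeddings of the trees (T_i,r_i) in H. -/

import Mathlib

/-- An `(m,γ)`-dense spot in a graph `G`: a non-empty bipartite subgraph `(A,B;F)` of `G`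
with density greater than `γ` and minimum degree greater than `m`. -/
structure DenseSpot (V : Type) [Fintype V] (G : SimpleGraph V) (m γ : ℝ) where
  A : Finset V
  B : Finset V
  F : SimpleGraph V
  disj : Disjoint A B
  le : F ≤ G
  bipartite : ∀ ⦃a b : V⦄, F.Adj a b → (a ∈ A ∧ b ∈ B) ∨ (a ∈ B ∧ b ∈ A)
  nonempty : ∃ a b, F.Adj a b
  dense : γ * ((A.card : ℝ) * (B.card : ℝ)) < (F.edgeSet.ncard : ℝ)
  mindeg : ∀ v : V, v ∈ A ∨ v ∈ B → m < ((F.neighborSet v).ncard : ℝ)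

/-- The vertex set of a dense spot. -/
def DenseSpot.verts {V : Type} [Fintype V] {G : SimpleGraph V} {m γ : ℝ}
    (D : DenseSpot V G m γ) : Set V :=
  (↑D.A : Set V) ∪ (↑D.B : Set V)

/-- `E` is a `(Λ,ε,γ,k)`-avoiding set with respect to a family `𝒟` of dense spots:
`E ⊆ ⋃_{D ∈ 𝒟} V(D)` and for every `U` with `|U| ≤ Λk`, all but at most `εk` vertices
`v ∈ E` lie in some spot `D ∈ 𝒟` with `|U ∩ V(D)| ≤ γ²k`. -/
def IsAvoiding {V : Type} [Fintype V] {G : SimpleGraph V} {m : ℝ}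
    (Λ : ℕ) (ε γ : ℝ) (k : ℕ) (𝒟 : Set (DenseSpot V G m γ)) (E : Set V) : Prop :=
  (E ⊆ ⋃ D ∈ 𝒟, D.verts) ∧
    ∀ U : Set V, (U.ncard : ℝ) ≤ (Λ : ℝ) * k →
      (({v ∈ E | ¬ ∃ D ∈ 𝒟, v ∈ D.verts ∧ ((U ∩ D.verts).ncard : ℝ) ≤ γ ^ 2 * k}).ncard : ℝ)
        ≤ ε * k


open Finset SimpleGraph

/-- If `x ∉ s` has two neighbours `y, z` joined by a walk inside `s`, then `y = z`
(in an acyclic graph). -/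
lemma aux_unique {Vt : Type} [DecidableEq Vt] {T : SimpleGraph Vt} (hT : T.IsAcyclic)
    {x y z : Vt} {s : Finset Vt} (hx : x ∉ s) (hxy : T.Adj x y) (hxz : T.Adj x z)
    (w : T.Walk y z) (hw : ∀ u ∈ w.support, u ∈ s) : y = z := by
  by_contra hne
  set p : T.Walk y z := (w.toPath : T.Walk y z) with hp_def
  have hp : p.IsPath := w.toPath.2
  have hsupp : ∀ u ∈ p.support, u ∈ s := fun u hu => hw u (w.support_toPath_subset hu)
  have hxp : x ∉ p.support := fun h => hx (hsupp x h)
  have hq : (SimpleGraph.Walk.cons hxy p).IsPath := hp.cons hxp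
  have hcyc : (SimpleGraph.Walk.cons hxz.symm (SimpleGraph.Walk.cons hxy p)).IsCycle := by
    rw [SimpleGraph.Walk.cons_isCycle_iff]
    refine ⟨hq, ?_⟩
    intro hmem
    rw [SimpleGraph.Walk.edges_cons, List.mem_cons] at hmem
    rcases hmem with h | h
    · rw [Sym2.eq_iff] at h
      rcases h with ⟨h1, h2⟩ | ⟨h1, h2⟩
      · exact hx (h1 ▸ hsupp z p.end_mem_support)
      · exact hne h1.symm
    · exact hxp (p.snd_mem_support_of_mem_edges h)
  exact hT _ hcyc

/-- Greedy extension of a partial tree embedding. -/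
lemma aux_grow {V Vt : Type} [Fintype V] [DecidableEq V] [Fintype Vt] [DecidableEq Vt]
    {T : SimpleGraph Vt} (hT : T.IsTree) (r : Vt)
    (F : SimpleGraph V) [DecidableRel F.Adj]
    (S : Finset V) (hnbr : ∀ a b : V, F.Adj a b → b ∈ S)
    (Bad : Finset V) (v : V)
    (hdeg : ∀ x ∈ S, Bad.card + Fintype.card Vt ≤ (F.neighborFinset x).card) :
    ∀ m : ℕ, ∀ s : Finset Vt, sᶜ.card = m → r ∈ s →
      (∀ a ∈ s, ∃ p : T.Walk r a, ∀ z ∈ p.support, z ∈ s) →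
      ∀ f : Vt → V, (∀ a ∈ s, ∀ b ∈ s, a ≠ b → f a ≠ f b) →
        f r = v → (∀ a ∈ s, f a ∈ S) →
        (∀ a ∈ s, a ≠ r → f a ∉ Bad) →
        (∀ a ∈ s, ∀ b ∈ s, T.Adj a b → F.Adj (f a) (f b)) →
        ∃ g : Vt → V, Function.Injective g ∧ g r = v ∧
          (∀ a, a ≠ r → g a ∈ S ∧ g a ∉ Bad) ∧
          (∀ a b, T.Adj a b → F.Adj (g a) (g b)) := by
  intro m
  induction m with
  | zero =>
    intro s hs hr hconn f hinj hfr hfS hfB hhom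
    have hsu : s = Finset.univ := by
      have : sᶜ = ∅ := Finset.card_eq_zero.mp hs
      rwa [Finset.compl_eq_empty_iff] at this
    subst hsu
    refine ⟨f, ?_, hfr, ?_, ?_⟩
    · intro a b hab
      by_contra hne
      exact hinj a (Finset.mem_univ a) b (Finset.mem_univ b) hne hab
    · exact fun a ha => ⟨hfS a (Finset.mem_univ a), hfB a (Finset.mem_univ a) ha⟩
    · exact fun a b hab => hhom a (Finset.mem_univ a) b (Finset.mem_univ b) hab
  | succ m ih =>
    intro s hs hr hconn f hinj hfr hfS hfB hhom
    obtain ⟨a0, ha0⟩ := Finset.card_pos.mp (by omega : 0 < sᶜ.card)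
    have ha0' : a0 ∉ s := Finset.mem_compl.mp ha0
    obtain ⟨p0⟩ := hT.isConnected.preconnected r a0
    obtain ⟨⟨⟨y, x⟩, hyx⟩, -, hd1, hd2⟩ :=
      p0.exists_boundary_dart (↑s : Set Vt) (by exact_mod_cast hr) (by exact_mod_cast ha0')
    have hys : y ∈ s := by exact_mod_cast hd1
    have hxs : x ∉ s := by exact_mod_cast hd2
    have hyx' : T.Adj y x := hyx
    -- choose an image for x
    have hfyS : f y ∈ S := hfS y hys
    have hcard : s.card + (m + 1) = Fintype.card Vt := by
      rw [← hs]; exact s.card_add_card_compl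
    have hW : 0 < ((F.neighborFinset (f y)) \ (Bad ∪ s.image f)).card := by
      have h1 := Finset.card_le_card_sdiff_add_card (s := F.neighborFinset (f y))
        (t := Bad ∪ s.image f)
      have h2 : (Bad ∪ s.image f).card ≤ Bad.card + s.card :=
        le_trans (Finset.card_union_le _ _) (by gcongr; exact Finset.card_image_le)
      have h3 := hdeg (f y) hfyS
      omega
    obtain ⟨w, hw⟩ := Finset.card_pos.mp hW
    rw [Finset.mem_sdiff] at hw
    obtain ⟨hwnb, hwout⟩ := hw
    have hadjw : F.Adj (f y) w := (F.mem_neighborFinset _ _).mp hwnb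
    have hwS : w ∈ S := hnbr _ _ hadjw
    have hwBad : w ∉ Bad := fun h => hwout (Finset.mem_union_left _ h)
    have hwim : w ∉ s.image f := fun h => hwout (Finset.mem_union_right _ h)
    -- uniqueness of neighbour of x inside s
    have huniq : ∀ b ∈ s, T.Adj x b → b = y := by
      intro b hb hxb
      obtain ⟨pb, hpb⟩ := hconn b hb
      obtain ⟨py, hpy⟩ := hconn y hys
      refine aux_unique hT.IsAcyclic hxs hxb hyx'.symm (pb.reverse.append py) ?_
      intro u hu
      rw [SimpleGraph.Walk.mem_support_append_iff] at hu
      rcases hu with hu | hu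
      · rw [SimpleGraph.Walk.support_reverse, List.mem_reverse] at hu
        exact hpb u hu
      · exact hpy u hu
    -- extend the embedding
    have hgs : ∀ a ∈ s, Function.update f x w a = f a := by
      intro a ha
      exact Function.update_of_ne (fun h => hxs (by rwa [h] at ha)) _ _
    have hrx : r ≠ x := fun h => hxs (by rwa [h] at hr)
    have hgx : Function.update f x w x = w := Function.update_self _ _ _
    refine ih (insert x s) ?_ (Finset.mem_insert_of_mem hr) ?_ (Function.update f x w)
      ?_ ?_ ?_ ?_ ?_
    · rw [Finset.compl_insert, Finset.card_erase_of_mem (Finset.mem_compl.mpr hxs), hs]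
      omega
    · -- connectivity
      intro a ha
      rcases Finset.mem_insert.mp ha with rfl | ha
      · obtain ⟨py, hpy⟩ := hconn y hys
        refine ⟨py.concat hyx', ?_⟩
        intro z hz
        rw [SimpleGraph.Walk.support_concat, List.mem_append] at hz
        rcases hz with hz | hz
        · exact Finset.mem_insert_of_mem (hpy z hz)
        · rw [List.mem_singleton] at hz
          exact hz ▸ Finset.mem_insert_self _ _
      · obtain ⟨pa, hpa⟩ := hconn a ha
        exact ⟨pa, fun z hz => Finset.mem_insert_of_mem (hpa z hz)⟩
    · -- injectivity on insert x s
      intro a ha b hb hab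
      rcases Finset.mem_insert.mp ha with hax | ha
      · rcases Finset.mem_insert.mp hb with hbx | hb
        · exact absurd (hax.trans hbx.symm) hab
        · rw [hax, hgx, hgs b hb]
          exact fun h => hwim (Finset.mem_image.mpr ⟨b, hb, h.symm⟩)
      · rcases Finset.mem_insert.mp hb with hbx | hb
        · rw [hbx, hgx, hgs a ha]
          exact fun h => hwim (Finset.mem_image.mpr ⟨a, ha, h⟩)
        · rw [hgs a ha, hgs b hb]
          exact hinj a ha b hb hab
    · rw [hgs r hr]; exact hfr
    · intro a ha
      rcases Finset.mem_insert.mp ha with rfl | ha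
      · rw [hgx]; exact hwS
      · rw [hgs a ha]; exact hfS a ha
    · intro a ha har
      rcases Finset.mem_insert.mp ha with rfl | ha
      · rw [hgx]; exact hwBad
      · rw [hgs a ha]; exact hfB a ha har
    · -- homomorphism on insert x s
      intro a ha b hb hab
      rcases Finset.mem_insert.mp ha with hax | ha
      · rcases Finset.mem_insert.mp hb with hbx | hb
        · rw [hax, hbx] at hab
          exact absurd hab T.irrefl
        · have hb' : b = y := huniq b hb (hax ▸ hab)
          rw [hax, hgx, hgs b hb, hb']
          exact hadjw.symm
      · rcases Finset.mem_insert.mp hb with hbx | hb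
        · have ha' : a = y := huniq a ha (hbx ▸ hab.symm)
          rw [hbx, hgx, hgs a ha, ha']
          exact hadjw
        · rw [hgs a ha, hgs b hb]
          exact hhom a ha b hb hab

/-- Embedding a single rooted tree greedily. -/
lemma aux_embed {V Vt : Type} [Fintype V] [DecidableEq V] [Fintype Vt] [DecidableEq Vt]
    {T : SimpleGraph Vt} (hT : T.IsTree) (r : Vt)
    (F : SimpleGraph V) [DecidableRel F.Adj]
    (S : Finset V) (hnbr : ∀ a b : V, F.Adj a b → b ∈ S)
    (Bad : Finset V) (v : V) (hv : v ∈ S)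
    (hdeg : ∀ x ∈ S, Bad.card + Fintype.card Vt ≤ (F.neighborFinset x).card) :
    ∃ g : Vt → V, Function.Injective g ∧ g r = v ∧
      (∀ a, a ≠ r → g a ∈ S ∧ g a ∉ Bad) ∧
      (∀ a b, T.Adj a b → F.Adj (g a) (g b)) := by
  refine aux_grow hT r F S hnbr Bad v hdeg _ ({r} : Finset Vt) rfl (Finset.mem_singleton_self r)
    ?_ (fun _ => v) ?_ rfl ?_ ?_ ?_
  · intro a ha
    rw [Finset.mem_singleton] at ha
    subst ha
    exact ⟨SimpleGraph.Walk.nil, by simp⟩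
  · intro a ha b hb hab
    rw [Finset.mem_singleton] at ha hb
    exact absurd (ha.trans hb.symm) hab
  · intro a _; exact hv
  · intro a ha har
    rw [Finset.mem_singleton] at ha
    exact absurd ha har
  · intro a ha b hb hab
    rw [Finset.mem_singleton] at ha hb
    rw [ha, hb] at hab
    exact absurd hab T.irrefl

/-- Embedding a family of rooted trees of total order at most `γk/2` using a
`(Λ,ε,γ,k)`-avoiding set: the roots go to `U* ⊆ 𝔼` and the remaining vertices avoid `U`. -/
theorem stmt7 (V : Type) [Fintype V] (H : SimpleGraph V)
    (Λ k : ℕ) (hΛ : 0 < Λ) (hk : 0 < k)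
    (ε γ : ℝ) (hε : ε ∈ Set.Ioo (0 : ℝ) (1 / 2)) (hγ : γ ∈ Set.Ioo (0 : ℝ) (1 / 2))
    (hεγ : ε < γ ^ 2)
    (𝒟 : Set (DenseSpot V H (γ * k) γ)) (E : Set V)
    (havoid : IsAvoiding Λ ε γ k 𝒟 E)
    (ℓ : ℕ) (Vt : Fin ℓ → Type) [∀ i, Fintype (Vt i)]
    (T : ∀ i, SimpleGraph (Vt i)) (hT : ∀ i, (T i).IsTree) (r : ∀ i, Vt i)
    (horder : ((∑ i, Fintype.card (Vt i) : ℕ) : ℝ) ≤ γ * k / 2)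
    (U : Set V) (hU : (U.ncard : ℝ) ≤ (Λ : ℝ) * k)
    (Ustar : Set V) (hUs : Ustar ⊆ E) (hUscard : ε * k + ℓ ≤ (Ustar.ncard : ℝ)) :
    ∃ φ : ∀ i, T i →g H,
      (∀ i, Function.Injective (φ i)) ∧
      (∀ i j, i ≠ j → ∀ (a : Vt i) (b : Vt j), φ i a ≠ φ j b) ∧
      (∀ i, φ i (r i) ∈ Ustar) ∧
      (∀ i (a : Vt i), a ≠ r i → φ i a ∉ U) := by
  classical
  obtain ⟨hεpos, hεhalf⟩ := hε
  obtain ⟨hγpos, hγhalf⟩ := hγ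
  have hγk : (0 : ℝ) < γ * k := by positivity
  set N : ℕ := ∑ i, Fintype.card (Vt i) with hN
  set BadV : Set V :=
    {v ∈ E | ¬ ∃ D ∈ 𝒟, v ∈ D.verts ∧ ((U ∩ D.verts).ncard : ℝ) ≤ γ ^ 2 * k} with hBadV
  have hbad : ((BadV.ncard : ℝ)) ≤ ε * k := havoid.2 U hU
  -- there are at least ℓ good vertices in Ustar
  have hGoodℕ : ℓ ≤ (Ustar \ BadV).ncard := by
    have h1 : (Ustar ∩ BadV).ncard + (Ustar \ BadV).ncard = Ustar.ncard :=
      Set.ncard_inter_add_ncard_diff_eq_ncard Ustar BadV (Set.toFinite _)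
    have h2 : ((Ustar ∩ BadV).ncard : ℝ) ≤ ε * k :=
      le_trans (by exact_mod_cast Set.ncard_le_ncard Set.inter_subset_right (Set.toFinite _)) hbad
    have : (ℓ : ℝ) ≤ ((Ustar \ BadV).ncard : ℝ) := by
      have h1' : ((Ustar ∩ BadV).ncard : ℝ) + ((Ustar \ BadV).ncard : ℝ) = (Ustar.ncard : ℝ) := by
        exact_mod_cast congrArg (fun n : ℕ => (n : ℝ)) h1
      linarith
    exact_mod_cast this
  -- choose distinct good root vertices
  obtain ⟨t0, ht0sub, ht0card⟩ := Finset.exists_subset_card_eq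
    (s := (Ustar \ BadV).toFinset) (n := ℓ)
    (by rwa [← Set.ncard_eq_toFinset_card'] )
  set e := t0.equivFinOfCardEq ht0card with he
  set f : Fin ℓ → V := fun i => ((e.symm i : t0) : V) with hf
  have hfinj : Function.Injective f := by
    intro i j hij
    have : (e.symm i : t0) = (e.symm j : t0) := Subtype.ext hij
    simpa using e.symm.injective this
  have hfmem : ∀ i, f i ∈ Ustar \ BadV := by
    intro i
    have : (f i) ∈ t0 := (e.symm i).2
    have := ht0sub this
    rwa [Set.mem_toFinset] at this
  have hfP : ∀ i, ∃ D ∈ 𝒟, f i ∈ D.verts ∧ ((U ∩ D.verts).ncard : ℝ) ≤ γ ^ 2 * k := by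
    intro i
    have h1 := hfmem i
    have h2 : f i ∈ E := hUs h1.1
    by_contra hcon
    exact h1.2 ⟨h2, hcon⟩
  choose D hD𝒟 hDmem hDU using hfP
  set RootF : Finset V := Finset.image f Finset.univ with hRootF
  have hNle : ((N : ℕ) : ℝ) ≤ γ * k / 2 := horder
  have hmain : ∀ t : Finset (Fin ℓ), ∃ φ : ∀ i, Vt i → V,
      (∀ i ∈ t, ∀ a b, (T i).Adj a b → H.Adj (φ i a) (φ i b)) ∧
      (∀ i ∈ t, Function.Injective (φ i)) ∧
      (∀ i ∈ t, φ i (r i) = f i) ∧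
      (∀ i ∈ t, ∀ a, a ≠ r i → φ i a ∉ U ∧ φ i a ∉ RootF) ∧
      (∀ i ∈ t, ∀ j ∈ t, i ≠ j → ∀ a b, φ i a ≠ φ j b) := by
    intro t
    induction t using Finset.induction_on with
    | empty => exact ⟨fun j _ => f j, by simp, by simp, by simp, by simp, by simp⟩
    | @insert i t hi ih =>
      obtain ⟨ψ, hψhom, hψinj, hψroot, hψavoid, hψdisj⟩ := ih
      set Used : Finset V := t.biUnion (fun j => Finset.image (ψ j) Finset.univ) with hUsed
      set Di := D i with hDi
      set S : Finset V := Di.A ∪ Di.B with hS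
      set F := Di.F with hF
      letI : DecidableRel F.Adj := Classical.decRel _
      set UF : Finset V := (U ∩ Di.verts).toFinset with hUF
      set Bad : Finset V := UF ∪ (RootF ∪ Used) with hBad
      have hSverts : ∀ x : V, x ∈ S ↔ x ∈ Di.verts := by
        intro x
        simp [hS, DenseSpot.verts, Finset.mem_union]
      have hnbr : ∀ a b : V, F.Adj a b → b ∈ S := by
        intro a b hab
        rcases Di.bipartite hab with ⟨_, hb⟩ | ⟨_, hb⟩
        · exact Finset.mem_union_right _ hb
        · exact Finset.mem_union_left _ hb
      have hv : f i ∈ S := (hSverts _).2 (hDmem i)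
      have hUsedcard : Used.card ≤ ∑ j ∈ t, Fintype.card (Vt j) := by
        refine le_trans Finset.card_biUnion_le (Finset.sum_le_sum ?_)
        intro j _
        exact le_trans Finset.card_image_le (by simp)
      have hRootsub : RootF \ Used ⊆ Finset.image f tᶜ := by
        intro x hx
        rw [Finset.mem_sdiff] at hx
        obtain ⟨hx1, hx2⟩ := hx
        rw [Finset.mem_image] at hx1
        obtain ⟨j, -, rfl⟩ := hx1
        rw [Finset.mem_image]
        refine ⟨j, Finset.mem_compl.mpr ?_, rfl⟩
        intro hjt
        exact hx2 (Finset.mem_biUnion.mpr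
          ⟨j, hjt, Finset.mem_image.mpr ⟨r j, Finset.mem_univ _, hψroot j hjt⟩⟩)
      have hcompl : i ∈ tᶜ := Finset.mem_compl.mpr hi
      have hNsplit : (∑ j ∈ t, Fintype.card (Vt j)) + (Fintype.card (Vt i)
          + ∑ j ∈ tᶜ.erase i, Fintype.card (Vt j)) = N := by
        rw [Finset.add_sum_erase tᶜ (fun j => Fintype.card (Vt j)) hcompl, hN]
        exact Finset.sum_add_sum_compl t _
      have herase : (tᶜ.erase i).card ≤ ∑ j ∈ tᶜ.erase i, Fintype.card (Vt j) := by
        rw [Finset.card_eq_sum_ones]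
        refine Finset.sum_le_sum ?_
        intro j _
        have : Nonempty (Vt j) := ⟨r j⟩
        exact Fintype.card_pos
      have hBadcard : Bad.card + Fintype.card (Vt i) ≤ UF.card + N + 1 := by
        have h1 : Bad.card ≤ UF.card + (RootF ∪ Used).card := Finset.card_union_le _ _
        have h2 : (RootF ∪ Used).card ≤ (RootF \ Used).card + Used.card := by
          rw [← Finset.sdiff_union_self_eq_union]
          exact Finset.card_union_le _ _
        have h3 : (RootF \ Used).card ≤ tᶜ.card :=
          le_trans (Finset.card_le_card hRootsub) Finset.card_image_le
        have h4 : tᶜ.card = (tᶜ.erase i).card + 1 := by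
          rw [Finset.card_erase_of_mem hcompl]
          have : 0 < tᶜ.card := Finset.card_pos.mpr ⟨i, hcompl⟩
          omega
        omega
      have hUFcard : ((UF.card : ℕ) : ℝ) ≤ γ ^ 2 * k := by
        have : (U ∩ Di.verts).ncard = UF.card := Set.ncard_eq_toFinset_card' _
        rw [← this]
        exact hDU i
      have hdeg : ∀ x ∈ S, Bad.card + Fintype.card (Vt i) ≤ (F.neighborFinset x).card := by
        intro x hx
        have hxAB : x ∈ Di.A ∨ x ∈ Di.B := Finset.mem_union.mp hx
        have hmind := Di.mindeg x hxAB
        have hcardeq : ((F.neighborSet x).ncard : ℝ) = ((F.neighborFinset x).card : ℝ) := by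
          congr 1
          rw [SimpleGraph.neighborFinset_def, Set.ncard_eq_toFinset_card']
        rw [hcardeq] at hmind
        have hb : ((Bad.card + Fintype.card (Vt i) : ℕ) : ℝ) ≤ (UF.card : ℝ) + N + 1 := by
          push_cast
          exact_mod_cast hBadcard
        have hγ2 : γ ^ 2 * k < γ * k / 2 := by nlinarith
        have hreal : ((Bad.card + Fintype.card (Vt i) : ℕ) : ℝ)
            < ((F.neighborFinset x).card : ℝ) + 1 := by linarith
        have : Bad.card + Fintype.card (Vt i) < (F.neighborFinset x).card + 1 := by
          exact_mod_cast hreal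
        omega
      obtain ⟨g, hginj, hgroot, hgprop, hghom⟩ :=
        aux_embed (hT i) (r i) F S hnbr Bad (f i) hv hdeg
      have hcross : ∀ j ∈ t, ∀ (a : Vt i) (b : Vt j), g a ≠ ψ j b := by
        intro j hj a b
        by_cases ha : a = r i
        · subst ha
          rw [hgroot]
          by_cases hb : b = r j
          · subst hb
            rw [hψroot j hj]
            intro h
            exact hi ((hfinj h) ▸ hj)
          · intro h
            exact (hψavoid j hj b hb).2
              (Finset.mem_image.mpr ⟨i, Finset.mem_univ _, h⟩)
        · intro h
          refine (hgprop a ha).2 ?_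
          rw [hBad, h]
          refine Finset.mem_union_right _ (Finset.mem_union_right _ ?_)
          exact Finset.mem_biUnion.mpr ⟨j, hj, Finset.mem_image.mpr ⟨b, Finset.mem_univ _, rfl⟩⟩
      have hne_of_mem : ∀ j, j ∈ t → j ≠ i := fun j hj h => hi (h ▸ hj)
      refine ⟨Function.update ψ i g, ?_, ?_, ?_, ?_, ?_⟩
      · intro j hj a b hab
        rcases Finset.mem_insert.mp hj with rfl | hj
        · rw [Function.update_self]
          exact Di.le (hghom a b hab)
        · rw [Function.update_of_ne (hne_of_mem j hj)]
          exact hψhom j hj a b hab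
      · intro j hj
        rcases Finset.mem_insert.mp hj with rfl | hj
        · rw [Function.update_self]; exact hginj
        · rw [Function.update_of_ne (hne_of_mem j hj)]
          exact hψinj j hj
      · intro j hj
        rcases Finset.mem_insert.mp hj with rfl | hj
        · rw [Function.update_self]; exact hgroot
        · rw [Function.update_of_ne (hne_of_mem j hj)]
          exact hψroot j hj
      · intro j hj a haj
        rcases Finset.mem_insert.mp hj with rfl | hj
        · rw [Function.update_self]
          obtain ⟨hgS, hgB⟩ := hgprop a haj
          constructor
          · intro hU'
            refine hgB ?_
            rw [hBad]
            refine Finset.mem_union_left _ ?_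
            rw [hUF, Set.mem_toFinset]
            exact ⟨hU', (hSverts _).1 hgS⟩
          · intro hR
            exact hgB (Finset.mem_union_right _ (Finset.mem_union_left _ hR))
        · rw [Function.update_of_ne (hne_of_mem j hj)]
          exact hψavoid j hj a haj
      · intro j hj j' hj' hne a b
        rcases Finset.mem_insert.mp hj with rfl | hjt
        · rcases Finset.mem_insert.mp hj' with rfl | hj't
          · exact absurd rfl hne
          · rw [Function.update_self, Function.update_of_ne (hne_of_mem j' hj't)]
            exact hcross j' hj't a b
        · rcases Finset.mem_insert.mp hj' with rfl | hj't
          · rw [Function.update_self, Function.update_of_ne (hne_of_mem j hjt)]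
            exact fun h => hcross j hjt b a h.symm
          · rw [Function.update_of_ne (hne_of_mem j hjt),
              Function.update_of_ne (hne_of_mem j' hj't)]
            exact hψdisj j hjt j' hj't hne a b
  obtain ⟨φ₀, hhom, hinj, hroot, havd, hdisj⟩ := hmain Finset.univ
  refine ⟨fun i => ⟨φ₀ i, fun {a b} hab => hhom i (Finset.mem_univ i) a b hab⟩, ?_, ?_, ?_, ?_⟩
  · exact fun i => hinj i (Finset.mem_univ i)
  · exact fun i j hne a b => hdisj i (Finset.mem_univ i) j (Finset.mem_univ j) hne a b
  · intro i
    have h : φ₀ i (r i) = f i := hroot i (Finset.mem_univ i)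
    show φ₀ i (r i) ∈ Ustar
    rw [h]
    exact (hfmem i).1
  · intro i a ha
    exact (havd i (Finset.mem_univ i) a ha).1
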